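/- Let ε₀ = 2·cos(π/10) − √2. For all natural numbers a, b ≥ 1 with a + b ≥ 3, (a·b + 1)/((√2·a + ε₀)·(√2·b + ε₀)) < 1/2. -/
import Mathlib


open Real

theorem stmt14 (a b : ℕ) (ha : 1 ≤ a) (hb : 1 ≤ b) (hab : 3 ≤ a + b) :
    ((a : ℝ) * b + 1) /
      ((Real.sqrt 2 * a + (2 * Real.cos (π / 10) - Real.sqrt 2)) *
        (Real.sqrt 2 * b + (2 * Real.cos (π / 10) - Real.sqrt 2))) < 1 / 2 := by
  have ha' : (1 : ℝ) ≤ a := by exact_mod_cast ha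
  have hb' : (1 : ℝ) ≤ b := by exact_mod_cast hb
  have hab' : (3 : ℝ) ≤ (a : ℝ) + b := by exact_mod_cast hab
  have hs2 : Real.sqrt 2 ^ 2 = 2 := Real.sq_sqrt (by norm_num)
  have hs1 : (1.414 : ℝ) < Real.sqrt 2 := by
    rw [show (1.414 : ℝ) = Real.sqrt (1.414 ^ 2) by
      rw [Real.sqrt_sq (by norm_num)]]
    exact Real.sqrt_lt_sqrt (by norm_num) (by norm_num)
  have hs1' : Real.sqrt 2 < 1.415 := by
    rw [show (1.415 : ℝ) = Real.sqrt (1.415 ^ 2) by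
      rw [Real.sqrt_sq (by norm_num)]]
    exact Real.sqrt_lt_sqrt (by norm_num) (by norm_num)
  have hπ : π < 3.15 := by
    have := Real.pi_lt_d2
    linarith
  have hπ0 : 0 < π := Real.pi_pos
  have hcos : 1 - (π / 10) ^ 2 / 2 ≤ Real.cos (π / 10) :=
    Real.one_sub_sq_div_two_le_cos
  set c := Real.cos (π / 10) with hc
  set s := Real.sqrt 2 with hsdef
  have hclb : (0.95 : ℝ) < c := by nlinarith
  have hε : s / 3 < 2 * c - s := by nlinarith
  have hεpos : 0 < 2 * c - s := by nlinarith
  have hf1 : 0 < s * a + (2 * c - s) := by nlinarith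
  have hf2 : 0 < s * b + (2 * c - s) := by nlinarith
  rw [div_lt_iff₀ (by positivity)]
  nlinarith [mul_pos hf1 hf2, sq_nonneg (2 * c - s), mul_le_mul_of_nonneg_left hab' (le_of_lt (mul_pos (by nlinarith : (0:ℝ) < s) hεpos)), sq_nonneg ((a:ℝ) - b), mul_pos hεpos hεpos]
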